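/- Fix a positive integer m. There exist positive constants C₁ = C₁(m) and C₂ = C₂(m) such that for every α ∈ [0,1) and every integer k > m² + 1, ℙ( I^{(m)}(k·m) ≤ C₁·(1−α)^m·k ) ≤ e^{−C₂·(1−α)^m·k}, where I^{(m)}(k·m) := ∑_{j=1}^{k} 1{ every vertex of the block {m(j−1)+1, m(j−1)+2, …, m·j} is isolated in 𝔽_{k·m} }. -/

import Mathlib

open MeasureTheory Finset

/-- `IsForestRoot ξ u root` : `root k ω` is the label of the root of the connected component
of vertex `k` in the percolated random recursive forest built from `(ξ, u)`:
`root 1 = 1` and, for `k ≥ 2`, `root k = root (u k)` if the edge `{k, u k}` is retained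
(`ξ k = 1`), while `root k = k` if it is deleted. -/
def IsForestRoot {Ω : Type} (ξ : ℕ → Ω → Bool) (u : ℕ → Ω → ℕ)
    (root : ℕ → Ω → ℕ) : Prop :=
  (∀ ω, root 1 ω = 1) ∧
  ∀ ω, ∀ k, 2 ≤ k → root k ω = if ξ k ω = true then root (u k ω) ω else k

/-- `ForestLaw P α ξ u` : under the probability measure `P`, the `(ξ_k)_{k≥2}` are i.i.d.
Bernoulli(α), the `(u_k)_{k≥2}` are independent with `u_k` uniform on `{1,…,k−1}`, and all
these random variables are jointly independent; this is expressed by the finite-dimensional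
product formula, together with measurability of the random variables. -/
def ForestLaw {Ω : Type} [MeasurableSpace Ω] (P : Measure Ω) (α : ℝ)
    (ξ : ℕ → Ω → Bool) (u : ℕ → Ω → ℕ) : Prop :=
  (∀ k b, MeasurableSet {ω | ξ k ω = b}) ∧
  (∀ k j, MeasurableSet {ω | u k ω = j}) ∧
  ∀ n : ℕ, 2 ≤ n → ∀ (a : ℕ → Bool) (b : ℕ → ℕ),
    (P {ω | ∀ k, 2 ≤ k → k ≤ n → (ξ k ω = a k ∧ u k ω = b k)}).toReal =
      ∏ k ∈ Finset.Icc 2 n,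
        ((if a k = true then α else 1 - α) *
          (if 1 ≤ b k ∧ b k ≤ k - 1 then 1 / ((k : ℝ) - 1) else 0))

/-- `clusterSize root n j ω = |𝒞_{j,n}|`, the size of the cluster of the forest `𝔽_n`
rooted at `j` (equal to `0` if no cluster is rooted at `j`). -/
def clusterSize {Ω : Type} (root : ℕ → Ω → ℕ) (n j : ℕ) (ω : Ω) : ℕ :=
  ((Finset.Icc 1 n).filter fun k => root k ω = j).card

/-- `clusterCount root k n ω = N_k(n)`, the number of clusters of size `k` in `𝔽_n`.
In particular `clusterCount root 1 n ω = I(n)` is the number of isolated vertices. -/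
def clusterCount {Ω : Type} (root : ℕ → Ω → ℕ) (k n : ℕ) (ω : Ω) : ℕ :=
  ((Finset.Icc 1 n).filter fun j => clusterSize root n j ω = k).card

/-- `I^{(m)}(k·m)`: the number of blocks `{m(j−1)+1, …, m·j}`, `1 ≤ j ≤ k`, all of whose
vertices are isolated in `𝔽_{k·m}`. -/
def blockIsolatedCount {Ω : Type} (root : ℕ → Ω → ℕ) (m k : ℕ) (ω : Ω) : ℕ :=
  ((Finset.Icc 1 k).filter fun j =>
    ∀ v ∈ Finset.Icc (m * (j - 1) + 1) (m * j), clusterSize root (k * m) v ω = 1).card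

namespace PRRF

/-- the `j`-th block of vertices. -/
def Bb (m j : ℕ) : Finset ℕ := Finset.Icc (m*(j-1)+1) (m*j)

/-- value finset for coordinate `i`. -/
def Vc (i : ℕ) : Finset (Bool × ℕ) :=
  if 2 ≤ i then (Finset.univ ×ˢ Finset.Icc 1 (i-1)) else {(false, 0)}

/-- weight of a value at coordinate `i`. -/
noncomputable def wtc (α : ℝ) (i : ℕ) (x : Bool × ℕ) : ℝ :=
  if 2 ≤ i then (if x.1 = true then α else 1 - α) * (1 / ((i:ℝ) - 1)) else 1

/-- extension of a finitely supported configuration to all of ℕ. -/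
def gx (n : ℕ) (g : Fin (n+1) → Bool × ℕ) : ℕ → Bool × ℕ :=
  fun x => if h : x < n+1 then g ⟨x,h⟩ else (false, 0)

def Confs (n : ℕ) : Finset (Fin (n+1) → Bool × ℕ) := Fintype.piFinset (fun i => Vc i)

noncomputable def Wt (n : ℕ) (α : ℝ) (g : Fin (n+1) → Bool × ℕ) : ℝ := ∏ i, wtc α (i : Fin (n+1)) (g i)

/-- "block `j` certified isolated" as a predicate on configurations. -/
def Fcfg (m k j : ℕ) (c : ℕ → Bool × ℕ) : Prop :=
  (∀ v ∈ Bb m j, (c v).1 = false) ∧ ∀ w ∈ Finset.Ioc (m*j) (k*m), (c w).2 ∉ Bb m j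

instance (m k j : ℕ) (c : ℕ → Bool × ℕ) : Decidable (Fcfg m k j c) := by
  unfold Fcfg; exact instDecidableAnd

/-- number of certified-isolated blocks among the upper half. -/
def Xc (m k : ℕ) (c : ℕ → Bool × ℕ) : ℕ :=
  ((Finset.Icc (k/2+1) k).filter (fun j => Fcfg m k j c)).card

def classOf (m k j₁ : ℕ) (v : ℕ) : ℕ := if m*j₁ < v ∧ v ≤ k*m then (v-1)/m + 1 else 0

def σc (m k j₁ : ℕ) (i : ℕ) (x : Bool × ℕ) : Bool × ℕ :=
  (if i ∈ Bb m j₁ then false else x.1, classOf m k j₁ x.2)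

def fcP (m j₁ : ℕ) (i : ℕ) (x : Bool × ℕ) : Prop :=
  (i ∈ Bb m j₁ → x.1 = false) ∧ (m*j₁ < i → x.2 ∉ Bb m j₁)

instance (m j₁ i : ℕ) (x : Bool × ℕ) : Decidable (fcP m j₁ i x) := by
  unfold fcP; exact instDecidableAnd

noncomputable def fc (m j₁ : ℕ) (i : ℕ) (x : Bool × ℕ) : ℝ := if fcP m j₁ i x then 1 else 0

noncomputable def pc (m k j₁ : ℕ) (α : ℝ) (i : ℕ) : ℝ :=
  if i ∈ Bb m j₁ then 1-α else if m*j₁ < i then 1 - 1/((k/2+1 : ℕ):ℝ) else 1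

/-- trace version of Fcfg. -/
def Ftr (m k j : ℕ) (c : ℕ → Bool × ℕ) : Prop :=
  (∀ v ∈ Bb m j, (c v).1 = false) ∧ ∀ w ∈ Finset.Ioc (m*j) (k*m), (c w).2 ≠ j

instance (m k j : ℕ) (c : ℕ → Bool × ℕ) : Decidable (Ftr m k j c) := by
  unfold Ftr; exact instDecidableAnd

noncomputable def Sf (m k : ℕ) (α : ℝ) (j' : ℕ) : ℝ :=
  ∑ g ∈ Confs (k*m), Wt (k*m) α g *
    ∏ j ∈ Finset.Icc j' k, (if Fcfg m k j (gx (k*m) g) then (1/2:ℝ) else 1)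

noncomputable def pp (m : ℕ) (α : ℝ) : ℝ := (1-α)^m * Real.exp (-(2*m))

lemma gx_lt {n : ℕ} (g : Fin (n+1) → Bool × ℕ) {x : ℕ} (h : x < n+1) :
    gx n g x = g ⟨x,h⟩ := dif_pos h

lemma gx_coe {n : ℕ} (g : Fin (n+1) → Bool × ℕ) (i : Fin (n+1)) :
    gx n g i = g i := by
  rw [gx_lt g i.isLt]

lemma wtc_nonneg {α : ℝ} (h0 : 0 ≤ α) (h1 : α ≤ 1) (i : ℕ) (x : Bool × ℕ) :
    0 ≤ wtc α i x := by
  unfold wtc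
  split
  · apply mul_nonneg
    · split <;> linarith
    · apply div_nonneg zero_le_one
      have : (2:ℝ) ≤ (i:ℝ) := by exact_mod_cast ‹2 ≤ i›
      linarith
  · norm_num

lemma prod_fin_eq_prod_Icc {n : ℕ} (hn : 2 ≤ n) (f : ℕ → ℝ) (h0 : f 0 = 1) (h1 : f 1 = 1) :
    ∏ i : Fin (n+1), f i = ∏ x ∈ Finset.Icc 2 n, f x := by
  rw [Fin.prod_univ_eq_prod_range]
  have h02 : (0:ℕ) ≤ 2 := Nat.zero_le _
  have h2n : 2 ≤ n+1 := by omega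
  rw [Finset.range_eq_Ico, ← Finset.prod_Ico_consecutive f h02 h2n]
  have : Finset.Ico 0 2 = ({0,1} : Finset ℕ) := by decide
  rw [this]
  have : Finset.Ico 2 (n+1) = Finset.Icc 2 n := by
    rw [Finset.Ico_add_one_right_eq_Icc]
  rw [this, Finset.prod_pair (by norm_num), h0, h1, one_mul, one_mul]

lemma group_lemma {N : ℕ} (V T : Fin N → Finset (Bool × ℕ))
    (σ : Fin N → (Bool × ℕ) → (Bool × ℕ))
    (hσ : ∀ i, ∀ x ∈ V i, σ i x ∈ T i)
    (A : Fin N → (Bool × ℕ) → ℝ) (G : (Fin N → Bool × ℕ) → ℝ) :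
    ∑ g ∈ Fintype.piFinset V, G (fun i => σ i (g i)) * ∏ i, A i (g i)
      = ∑ t ∈ Fintype.piFinset T, G t * ∏ i, ∑ x ∈ (V i).filter (fun x => σ i x = t i), A i x := by
  have hstep : ∀ t : Fin N → Bool × ℕ,
      (∏ i, ∑ x ∈ (V i).filter (fun x => σ i x = t i), A i x)
        = ∑ g ∈ Fintype.piFinset V, if (fun i => σ i (g i)) = t then ∏ i, A i (g i) else 0 := by
    intro t
    have h1 : ∀ i : Fin N, (∑ x ∈ (V i).filter (fun x => σ i x = t i), A i x)
        = ∑ x ∈ V i, if σ i x = t i then A i x else 0 := by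
      intro i; rw [Finset.sum_filter]
    simp_rw [h1]
    rw [Finset.prod_univ_sum]
    refine Finset.sum_congr rfl fun g hg => ?_
    by_cases h : (fun i => σ i (g i)) = t
    · rw [if_pos h]
      refine Finset.prod_congr rfl fun i _ => ?_
      rw [if_pos (congrFun h i)]
    · rw [if_neg h]
      obtain ⟨i0, hi0⟩ : ∃ i, σ i (g i) ≠ t i := by
        by_contra hc; push_neg at hc; exact h (funext hc)
      exact Finset.prod_eq_zero (Finset.mem_univ i0) (if_neg hi0)
  calc ∑ g ∈ Fintype.piFinset V, G (fun i => σ i (g i)) * ∏ i, A i (g i)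
      = ∑ g ∈ Fintype.piFinset V, ∑ t ∈ Fintype.piFinset T,
          if (fun i => σ i (g i)) = t then G t * ∏ i, A i (g i) else 0 := by
        refine Finset.sum_congr rfl fun g hg => ?_
        have hmem : (fun i => σ i (g i)) ∈ Fintype.piFinset T := by
          rw [Fintype.mem_piFinset]
          exact fun i => hσ i (g i) (Fintype.mem_piFinset.mp hg i)
        rw [Finset.sum_ite_eq (Fintype.piFinset T) (fun i => σ i (g i))
          (fun t => G t * ∏ i, A i (g i)), if_pos hmem]
    _ = ∑ t ∈ Fintype.piFinset T, ∑ g ∈ Fintype.piFinset V,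
          if (fun i => σ i (g i)) = t then G t * ∏ i, A i (g i) else 0 := Finset.sum_comm
    _ = ∑ t ∈ Fintype.piFinset T, G t * ∏ i, ∑ x ∈ (V i).filter (fun x => σ i x = t i), A i x := by
        refine Finset.sum_congr rfl fun t ht => ?_
        rw [hstep t, Finset.mul_sum]
        refine Finset.sum_congr rfl fun g hg => ?_
        rw [mul_ite, mul_zero]


lemma sum_Vc {α : ℝ} (i : ℕ) : ∑ x ∈ Vc i, wtc α i x = 1 := by
  by_cases h2 : 2 ≤ i
  · unfold Vc wtc
    rw [if_pos h2]
    simp only [if_pos h2]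
    rw [Finset.sum_product]
    have hcard : (Finset.Icc 1 (i-1)).card = i-1 := by
      rw [Nat.card_Icc]; omega
    have hne : ((i:ℕ):ℝ) - 1 ≠ 0 := by
      have : (2:ℝ) ≤ (i:ℕ) := by exact_mod_cast h2
      linarith
    rw [Fintype.sum_bool]
    simp only [Finset.sum_const, hcard, nsmul_eq_mul, if_true, Bool.false_eq_true, if_false]
    have hcast : ((i-1 : ℕ):ℝ) = ((i:ℕ):ℝ) - 1 := by
      have h1 : 1 ≤ i := by omega
      push_cast [h1]
      ring
    rw [hcast]
    field_simp
    ring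
  · unfold Vc wtc
    rw [if_neg h2, Finset.sum_singleton, if_neg h2]

lemma sum_Wt {n : ℕ} (α : ℝ) :
    ∑ g ∈ Confs n, Wt n α g = 1 := by
  unfold Confs Wt
  rw [← Finset.prod_univ_sum]
  have : ∀ i : Fin (n+1), ∑ x ∈ Vc i, wtc α (i:ℕ) x = 1 := fun i => sum_Vc (i:ℕ)
  simp_rw [this]
  exact Finset.prod_const_one


lemma mem_Bb {m j v : ℕ} : v ∈ Bb m j ↔ m*(j-1)+1 ≤ v ∧ v ≤ m*j := Finset.mem_Icc

lemma classOf_eq_block {m k j₁ : ℕ} (hm : 1 ≤ m) {j : ℕ} (hj : j₁ < j) (hjk : j ≤ k) (v : ℕ) :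
    classOf m k j₁ v = j ↔ v ∈ Bb m j := by
  have hm0 : 0 < m := hm
  have hj1 : 1 ≤ j := by omega
  have hmj : m*j = m*(j-1)+m := by
    rw [← Nat.mul_succ]; congr 1; omega
  have hcomm1 : (j-1)*m = m*(j-1) := Nat.mul_comm _ _
  have hcomm2 : j*m = m*j := Nat.mul_comm _ _
  have hkm : m*j ≤ k*m := by
    rw [Nat.mul_comm k m]; exact Nat.mul_le_mul_left m hjk
  have hj₁j : m*j₁ ≤ m*(j-1) := Nat.mul_le_mul_left m (by omega)
  rw [mem_Bb]
  unfold classOf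
  by_cases hc : m*j₁ < v ∧ v ≤ k*m
  · rw [if_pos hc]
    constructor
    · intro h
      have hdiv : (v-1)/m = j-1 := by omega
      have hle : (j-1)*m ≤ v-1 := (Nat.le_div_iff_mul_le hm0).mp (le_of_eq hdiv.symm)
      have hlt : v-1 < j*m := (Nat.div_lt_iff_lt_mul hm0).mp (by omega)
      omega
    · intro h
      have hle : (j-1) ≤ (v-1)/m := (Nat.le_div_iff_mul_le hm0).mpr (by omega)
      have hlt : (v-1)/m < j := (Nat.div_lt_iff_lt_mul hm0).mpr (by omega)
      omega
  · rw [if_neg hc]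
    constructor
    · intro h; omega
    · intro h; exfalso; exact hc ⟨by omega, by omega⟩

lemma classOf_eq_zero {m k j₁ : ℕ} (v : ℕ) (hv : v ≤ k*m) :
    classOf m k j₁ v = 0 ↔ v ≤ m*j₁ := by
  unfold classOf
  by_cases hc : m*j₁ < v ∧ v ≤ k*m
  · rw [if_pos hc]; constructor
    · intro h; exact absurd h (Nat.succ_ne_zero _)
    · intro h; exfalso; omega
  · rw [if_neg hc]; constructor
    · intro _; omega
    · intro _; rfl

lemma lt_of_classOf_ne_zero {m k j₁ v : ℕ} (h : classOf m k j₁ v ≠ 0) : m*j₁ < v := by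
  unfold classOf at h
  by_cases hc : m*j₁ < v ∧ v ≤ k*m
  · exact hc.1
  · rw [if_neg hc] at h; exact absurd rfl h


lemma fiber_ineq {m k j₁ : ℕ} {α : ℝ} (hm : 1 ≤ m) (hk : 3 ≤ k)
    (hα0 : 0 ≤ α) (hα1 : α ≤ 1) (hj0 : k/2+1 ≤ j₁) (hjk : j₁ ≤ k)
    (i : ℕ) (hi : i ≤ k*m) (t : Bool × ℕ) :
    pc m k j₁ α i * ∑ x ∈ (Vc i).filter (fun x => σc m k j₁ i x = t), wtc α i x
      ≤ ∑ x ∈ (Vc i).filter (fun x => σc m k j₁ i x = t), wtc α i x * fc m j₁ i x := by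
  have hj₁2 : 2 ≤ j₁ := by omega
  have hmj₁2 : 2 ≤ m*j₁ := by nlinarith
  by_cases hiBb : i ∈ Bb m j₁
  · -- coordinate inside the peeled block
    obtain ⟨hbl, hbu⟩ := mem_Bb.mp hiBb
    have hi2 : 2 ≤ i := by nlinarith [Nat.mul_le_mul hm (show 1 ≤ j₁ - 1 by omega)]
    have hnotlt : ¬ (m*j₁ < i) := by omega
    have hpc : pc m k j₁ α i = 1 - α := if_pos hiBb
    rw [hpc]
    have hinv : 0 ≤ 1/((i:ℝ)-1) := by
      have : (2:ℝ) ≤ (i:ℝ) := by exact_mod_cast hi2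
      apply div_nonneg zero_le_one; linarith
    by_cases ht : t.1 = false
    · -- fiber is univ ×ˢ Vs
      have hfil : (Vc i).filter (fun x => σc m k j₁ i x = t)
          = Finset.univ ×ˢ ((Finset.Icc 1 (i-1)).filter (fun v => classOf m k j₁ v = t.2)) := by
        ext x
        simp only [Vc, if_pos hi2, σc, if_pos hiBb, Finset.mem_filter, Finset.mem_product,
          Finset.mem_univ, true_and, Prod.ext_iff]
        constructor
        · rintro ⟨h1, h2, h3⟩; exact ⟨h1, h3⟩
        · rintro ⟨h1, h3⟩; exact ⟨h1, ht.symm, h3⟩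
      have hw1 : ∀ v : ℕ, wtc α i (true,v) = α * (1/((i:ℝ)-1)) := by
        intro v; unfold wtc; rw [if_pos hi2]; simp
      have hw2 : ∀ v : ℕ, wtc α i (false,v) = (1-α) * (1/((i:ℝ)-1)) := by
        intro v; unfold wtc; rw [if_pos hi2]; simp
      have hf1 : ∀ v : ℕ, wtc α i (true,v) * fc m j₁ i (true,v) = 0 := by
        intro v
        have : ¬ fcP m j₁ i (true, v) := by
          unfold fcP; simp [hiBb]
        unfold fc; rw [if_neg this, mul_zero]
      have hf2 : ∀ v : ℕ, wtc α i (false,v) * fc m j₁ i (false,v) = (1-α) * (1/((i:ℝ)-1)) := by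
        intro v
        have : fcP m j₁ i (false, v) := by
          unfold fcP; simp [hnotlt]
        unfold fc; rw [if_pos this, mul_one, hw2]
      rw [hfil, Finset.sum_product, Finset.sum_product, Fintype.sum_bool, Fintype.sum_bool]
      simp only [hf1, hf2]
      simp only [hw1, hw2]
      simp only [Finset.sum_const, Finset.sum_const_zero, nsmul_eq_mul, zero_add]
      set c := (((Finset.Icc 1 (i-1)).filter (fun v => classOf m k j₁ v = t.2)).card : ℝ)
      apply le_of_eq
      ring
    · -- t.1 = true : empty fiber
      have hfil : (Vc i).filter (fun x => σc m k j₁ i x = t) = ∅ := by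
        rw [Finset.filter_eq_empty_iff]
        intro x hx hEq
        apply ht
        rw [← congrArg Prod.fst hEq]
        simp [σc, if_pos hiBb]
      rw [hfil]
      simp
  · by_cases hlt : m*j₁ < i
    · -- coordinate above the peeled block
      have hi2 : 2 ≤ i := by omega
      have hpc : pc m k j₁ α i = 1 - 1/((k/2+1 : ℕ):ℝ) := by
        unfold pc; rw [if_neg hiBb, if_pos hlt]
      have hJ1 : (1:ℝ) ≤ ((k/2+1 : ℕ):ℝ) := by exact_mod_cast Nat.le_add_left 1 (k/2)
      have hpc1 : pc m k j₁ α i ≤ 1 := by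
        rw [hpc]
        have : 0 ≤ 1/((k/2+1 : ℕ):ℝ) := by positivity
        linarith
      have hsum0 : 0 ≤ ∑ x ∈ (Vc i).filter (fun x => σc m k j₁ i x = t), wtc α i x :=
        Finset.sum_nonneg fun x _ => wtc_nonneg hα0 hα1 i x
      have hfc : ∀ v, fc m j₁ i (t.1,v) = if v ∈ Bb m j₁ then 0 else 1 := by
        intro v
        unfold fc fcP
        by_cases hvB : v ∈ Bb m j₁ <;> simp [hvB, hiBb, hlt]
      by_cases ht2 : t.2 = 0
      · -- "none" class : the real content
        have hfil : (Vc i).filter (fun x => σc m k j₁ i x = t)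
            = ({t.1} : Finset Bool) ×ˢ (Finset.Icc 1 (m*j₁)) := by
          ext x
          simp only [Vc, if_pos hi2, σc, if_neg hiBb, Finset.mem_filter, Finset.mem_product,
            Finset.mem_univ, true_and, Prod.ext_iff, Finset.mem_singleton, Finset.mem_Icc]
          constructor
          · rintro ⟨⟨hv1, hv2⟩, h1, h3⟩
            refine ⟨h1, hv1, ?_⟩
            have hvk : x.2 ≤ k*m := by omega
            exact (classOf_eq_zero x.2 hvk).mp (by rw [h3, ht2])
          · rintro ⟨h1, hv1, hv2⟩
            have hcl : classOf m k j₁ x.2 = 0 := (classOf_eq_zero x.2 (by omega)).mpr hv2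
            exact ⟨⟨hv1, by omega⟩, h1, by rw [hcl, ht2]⟩
        have hwtc : ∀ v : ℕ, wtc α i (t.1,v) = (if t.1 = true then α else 1-α) * (1/((i:ℝ)-1)) := by
          intro v; unfold wtc; rw [if_pos hi2]
        have hcomb : ∀ v : ℕ, wtc α i (t.1,v) * fc m j₁ i (t.1,v)
            = if v ∈ Bb m j₁ then 0 else (if t.1 = true then α else 1-α) * (1/((i:ℝ)-1)) := by
          intro v
          rw [hwtc, hfc]
          by_cases hvB : v ∈ Bb m j₁ <;> simp [hvB]
        rw [hfil, Finset.sum_product, Finset.sum_product, Finset.sum_singleton,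
          Finset.sum_singleton]
        simp only [hcomb]
        simp only [hwtc]
        rw [Finset.sum_ite, Finset.sum_const, Finset.sum_const, Finset.sum_const]
        have hfil2 : (Finset.Icc 1 (m*j₁)).filter (fun v => ¬ v ∈ Bb m j₁)
            = Finset.Icc 1 (m*(j₁-1)) := by
          have hmj : m*j₁ = m*(j₁-1)+m := by
            rw [← Nat.mul_succ]; congr 1; omega
          ext v
          simp only [Finset.mem_filter, Finset.mem_Icc, mem_Bb]
          omega
        rw [hfil2]
        simp only [smul_zero, zero_add, nsmul_eq_mul, Nat.card_Icc, hpc]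
        set J := ((k/2+1 : ℕ):ℝ) with hJdef
        set bfi := (if t.1 = true then α else 1-α) * (1/((i:ℝ)-1)) with hbfidef
        have hbfi0 : 0 ≤ bfi := by
          apply mul_nonneg
          · split <;> linarith
          · have : (2:ℝ) ≤ (i:ℝ) := by exact_mod_cast hi2
            apply div_nonneg zero_le_one; linarith
        have hJpos : (0:ℝ) < J := by linarith
        have hj₁J : J ≤ (j₁:ℝ) := by
          rw [hJdef]; exact_mod_cast hj0
        have hmj : m*j₁ = m*(j₁-1)+m := by
          rw [← Nat.mul_succ]; congr 1; omega
        have hc1 : ((m*(j₁-1)+1-1 : ℕ):ℝ) = (m:ℝ)*(j₁:ℝ) - m := by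
          have h10 : (m*(j₁-1)+1-1 : ℕ) = m*j₁ - m := by omega
          rw [h10]
          have h11 : m ≤ m*j₁ := by nlinarith
          push_cast [h11]
          ring
        have hc2 : ((m*j₁+1-1 : ℕ):ℝ) = (m:ℝ)*(j₁:ℝ) := by
          have h10 : (m*j₁+1-1 : ℕ) = m*j₁ := by omega
          rw [h10]; push_cast; ring
        rw [hc1, hc2]
        have hm0 : (0:ℝ) ≤ (m:ℝ) := Nat.cast_nonneg _
        have key : (1-1/J)*((m:ℝ)*(j₁:ℝ)) ≤ (m:ℝ)*(j₁:ℝ) - m := by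
          have h5 : (m:ℝ)*J ≤ (m:ℝ)*(j₁:ℝ) := mul_le_mul_of_nonneg_left hj₁J hm0
          have h7 : (m:ℝ) ≤ ((m:ℝ)*(j₁:ℝ))/J := (le_div_iff₀ hJpos).mpr h5
          have h8 : 1/J*((m:ℝ)*(j₁:ℝ)) = ((m:ℝ)*(j₁:ℝ))/J := by ring
          rw [sub_mul, one_mul, h8]
          linarith
        calc (1-1/J) * ((m:ℝ)*(j₁:ℝ) * bfi) = ((1-1/J)*((m:ℝ)*(j₁:ℝ))) * bfi := by ring
          _ ≤ ((m:ℝ)*(j₁:ℝ) - m) * bfi := mul_le_mul_of_nonneg_right key hbfi0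
      · -- pinned class : fc is identically 1 on the fiber
        have hone : ∀ x ∈ (Vc i).filter (fun x => σc m k j₁ i x = t), wtc α i x * fc m j₁ i x = wtc α i x := by
          intro x hx
          rw [Finset.mem_filter] at hx
          have h3 : classOf m k j₁ x.2 = t.2 := by
            have := congrArg Prod.snd hx.2
            simpa [σc] using this
          have hv : m*j₁ < x.2 := lt_of_classOf_ne_zero (by rw [h3]; exact ht2)
          have hvB : x.2 ∉ Bb m j₁ := by
            rw [mem_Bb]; omega
          have : fcP m j₁ i x := ⟨fun h => absurd h hiBb, fun _ => hvB⟩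
          unfold fc
          rw [if_pos this, mul_one]
        rw [Finset.sum_congr rfl hone]
        calc pc m k j₁ α i * ∑ x ∈ (Vc i).filter (fun x => σc m k j₁ i x = t), wtc α i x
            ≤ 1 * ∑ x ∈ (Vc i).filter (fun x => σc m k j₁ i x = t), wtc α i x :=
              mul_le_mul_of_nonneg_right hpc1 hsum0
          _ = _ := one_mul _
    · -- low coordinate : trivial
      have hpc : pc m k j₁ α i = 1 := by
        unfold pc; rw [if_neg hiBb, if_neg hlt]
      rw [hpc, one_mul]
      apply le_of_eq
      refine Finset.sum_congr rfl fun x hx => ?_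
      have : fcP m j₁ i x := ⟨fun h => absurd h hiBb, fun h => absurd h hlt⟩
      unfold fc
      rw [if_pos this, mul_one]


lemma Bb_le {m j k : ℕ} (hjk : j ≤ k) (v : ℕ) (hv : v ∈ Bb m j) : v ≤ k*m := by
  have h1 := (mem_Bb.mp hv).2
  have h2 : m*j ≤ m*k := Nat.mul_le_mul_left m hjk
  have h3 : k*m = m*k := Nat.mul_comm _ _
  omega

lemma prod_fc_eq {m k j₁ : ℕ} (hjk : j₁ ≤ k)
    (g : Fin (k*m+1) → Bool × ℕ) :
    ∏ i : Fin (k*m+1), fc m j₁ (i:ℕ) (g i)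
      = if Fcfg m k j₁ (gx (k*m) g) then 1 else 0 := by
  unfold fc
  rw [Finset.prod_boole]
  have hiff : (∀ i ∈ (Finset.univ : Finset (Fin (k*m+1))), fcP m j₁ (i:ℕ) (g i))
      ↔ Fcfg m k j₁ (gx (k*m) g) := by
    constructor
    · intro h
      constructor
      · intro v hv
        have hv2 : v ≤ k*m := Bb_le hjk v hv
        have hvlt : v < k*m+1 := by omega
        rw [gx_lt g hvlt]
        exact (h ⟨v,hvlt⟩ (Finset.mem_univ _)).1 hv
      · intro w hw
        rw [Finset.mem_Ioc] at hw
        have hwlt : w < k*m+1 := by omega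
        rw [gx_lt g hwlt]
        exact (h ⟨w,hwlt⟩ (Finset.mem_univ _)).2 hw.1
    · intro h i _
      constructor
      · intro hiB
        have := h.1 (i:ℕ) hiB
        rwa [gx_coe] at this
      · intro hlt
        have hi_le : (i:ℕ) ≤ k*m := by omega
        have := h.2 (i:ℕ) (Finset.mem_Ioc.mpr ⟨hlt, hi_le⟩)
        rwa [gx_coe] at this
  simp only [hiff]

lemma Ftr_comp {m k j₁ : ℕ} (hm : 1 ≤ m) {j : ℕ} (hj : j₁ < j) (hjk : j ≤ k)
    (g : Fin (k*m+1) → Bool × ℕ) :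
    Ftr m k j (gx (k*m) (fun i => σc m k j₁ (i:ℕ) (g i)))
      ↔ Fcfg m k j (gx (k*m) g) := by
  have hgx : ∀ (x : ℕ) (hx : x < k*m+1),
      gx (k*m) (fun i => σc m k j₁ (i:ℕ) (g i)) x = σc m k j₁ x (g ⟨x,hx⟩) := by
    intro x hx; rw [gx_lt _ hx]
  have hBbj : ∀ v ∈ Bb m j, v ∉ Bb m j₁ := by
    intro v hv
    have h1 := (mem_Bb.mp hv).1
    have h2 : m*j₁ ≤ m*(j-1) := Nat.mul_le_mul_left m (by omega)
    rw [mem_Bb]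
    omega
  unfold Ftr Fcfg
  constructor
  · rintro ⟨h1, h2⟩
    constructor
    · intro v hv
      have hv2 : v ≤ k*m := Bb_le hjk v hv
      have hvlt : v < k*m+1 := by omega
      have := h1 v hv
      rw [hgx v hvlt] at this
      rw [gx_lt g hvlt]
      simp only [σc, if_neg (hBbj v hv)] at this
      exact this
    · intro w hw
      have hw2 := Finset.mem_Ioc.mp hw
      have hwlt : w < k*m+1 := by omega
      have := h2 w hw
      rw [hgx w hwlt] at this
      rw [gx_lt g hwlt]
      intro hmem
      apply this
      simp only [σc]
      exact (classOf_eq_block hm hj hjk _).mpr hmem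
  · rintro ⟨h1, h2⟩
    constructor
    · intro v hv
      have hv2 : v ≤ k*m := Bb_le hjk v hv
      have hvlt : v < k*m+1 := by omega
      rw [hgx v hvlt]
      simp only [σc, if_neg (hBbj v hv)]
      have := h1 v hv
      rwa [gx_lt g hvlt] at this
    · intro w hw
      have hw2 := Finset.mem_Ioc.mp hw
      have hwlt : w < k*m+1 := by omega
      rw [hgx w hwlt]
      simp only [σc]
      intro hcl
      have hmem := (classOf_eq_block hm hj hjk _).mp hcl
      have h2' := h2 w hw
      rw [gx_lt g hwlt] at h2'
      exact h2' hmem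

lemma prod_pc_ge {m k j₁ : ℕ} {α : ℝ} (hm : 1 ≤ m) (hk : 3 ≤ k) (hα0 : 0 ≤ α) (hα1 : α ≤ 1)
    (hj0 : k/2+1 ≤ j₁) (hjk : j₁ ≤ k) :
    pp m α ≤ ∏ i : Fin (k*m+1), pc m k j₁ α (i:ℕ) := by
  have hj₁2 : 2 ≤ j₁ := by omega
  have hmj₁2 : 2 ≤ m*j₁ := by nlinarith
  have hn2 : 2 ≤ k*m := by nlinarith
  have hBb2 : ∀ x : ℕ, x < 2 → x ∉ Bb m j₁ := by
    intro x hx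
    rw [mem_Bb]
    have : 1 ≤ m*(j₁-1) := by
      have := Nat.mul_le_mul hm (show 1 ≤ j₁-1 by omega)
      omega
    omega
  have h0 : pc m k j₁ α 0 = 1 := by
    unfold pc; rw [if_neg (hBb2 0 (by norm_num)), if_neg (by omega)]
  have h1 : pc m k j₁ α 1 = 1 := by
    unfold pc; rw [if_neg (hBb2 1 (by norm_num)), if_neg (by omega)]
  rw [prod_fin_eq_prod_Icc hn2 _ h0 h1]
  -- split pc as a product of two indicator factors
  have hsplit : ∀ x ∈ Finset.Icc 2 (k*m), pc m k j₁ α x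
      = (if x ∈ Bb m j₁ then 1-α else 1) * (if m*j₁ < x then 1 - 1/((k/2+1 : ℕ):ℝ) else 1) := by
    intro x hx
    unfold pc
    by_cases hB : x ∈ Bb m j₁
    · have hnl : ¬ m*j₁ < x := by
        have := (mem_Bb.mp hB).2; omega
      simp [hB, hnl]
    · by_cases hL : m*j₁ < x
      · simp [hB, hL]
      · simp [hB, hL]
  rw [Finset.prod_congr rfl hsplit, Finset.prod_mul_distrib]
  have hBsub : Bb m j₁ ⊆ Finset.Icc 2 (k*m) := by
    intro v hv
    have h1' := (mem_Bb.mp hv).1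
    have h2' := (mem_Bb.mp hv).2
    have h3' : 1 ≤ m*(j₁-1) := by
      have := Nat.mul_le_mul hm (show 1 ≤ j₁-1 by omega)
      omega
    have h4' : m*j₁ ≤ m*k := Nat.mul_le_mul_left m hjk
    have h5' : k*m = m*k := Nat.mul_comm _ _
    rw [Finset.mem_Icc]
    omega
  have hprod1 : ∏ x ∈ Finset.Icc 2 (k*m), (if x ∈ Bb m j₁ then 1-α else 1) = (1-α)^m := by
    rw [Finset.prod_ite, Finset.prod_const, Finset.prod_const_one, mul_one]
    congr 1
    rw [Finset.filter_mem_eq_inter, Finset.inter_eq_right.mpr hBsub]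
    unfold Bb
    rw [Nat.card_Icc]
    have hmj : m*j₁ = m*(j₁-1)+m := by
      rw [← Nat.mul_succ]; congr 1; omega
    omega
  have hprod2 : ∏ x ∈ Finset.Icc 2 (k*m), (if m*j₁ < x then 1 - 1/((k/2+1 : ℕ):ℝ) else 1)
      = (1 - 1/((k/2+1 : ℕ):ℝ))^(k*m - m*j₁) := by
    rw [Finset.prod_ite, Finset.prod_const, Finset.prod_const_one, mul_one]
    congr 1
    have : (Finset.Icc 2 (k*m)).filter (fun x => m*j₁ < x) = Finset.Icc (m*j₁+1) (k*m) := by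
      ext x
      simp only [Finset.mem_filter, Finset.mem_Icc]
      omega
    rw [this, Nat.card_Icc]
    omega
  rw [hprod1, hprod2]
  unfold pp
  set J := ((k/2+1 : ℕ):ℝ) with hJdef
  have hJ2 : (2:ℝ) ≤ J := by
    rw [hJdef]; exact_mod_cast (by omega : 2 ≤ k/2+1)
  have hJpos : (0:ℝ) < J := by linarith
  apply mul_le_mul_of_nonneg_left _ (pow_nonneg (by linarith) m)
  -- exp(-(2m)) ≤ (1 - 1/J)^(k*m - m*j₁)
  have hJinvpos : (0:ℝ) < 1/J := by positivity
  have hJhalf : 1/J ≤ 1/2 := by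
    rw [div_le_div_iff₀ hJpos (by norm_num)]
    linarith
  have hexp1 : Real.exp (-(2/J)) ≤ 1 - 1/J := by
    have he : 1 + 2/J ≤ Real.exp (2/J) := by
      have := Real.add_one_le_exp (2/J); linarith
    have hEpos : (0:ℝ) < Real.exp (2/J) := Real.exp_pos _
    have h9 : 1 ≤ (1-1/J)*(1+2/J) := by
      have expand : (1-1/J)*(1+2/J) = 1 + 1/J - 2*(1/J)*(1/J) := by
        field_simp; ring
      rw [expand]
      nlinarith [hJinvpos, hJhalf]
    have h10 : 1 ≤ (1-1/J) * Real.exp (2/J) := by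
      calc (1:ℝ) ≤ (1-1/J)*(1+2/J) := h9
        _ ≤ (1-1/J) * Real.exp (2/J) := mul_le_mul_of_nonneg_left he (by linarith)
    rw [Real.exp_neg]
    rw [inv_eq_one_div, div_le_iff₀ hEpos]
    linarith [h10]
  have hcard : (k*m - m*j₁ : ℕ) ≤ m*(k/2+1) := by
    have hA : m*(k/2+1) ≤ m*j₁ := Nat.mul_le_mul_left m hj0
    have hB : k*m = m*k := Nat.mul_comm _ _
    have hC : m*k ≤ m*(k/2+1) + m*(k/2+1) := by
      rw [← Nat.mul_add]
      exact Nat.mul_le_mul_left m (by omega)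
    omega
  have hstep1 : Real.exp (-(2*m)) ≤ Real.exp ((k*m - m*j₁ : ℕ) * (-(2/J))) := by
    apply Real.exp_le_exp.mpr
    have hc : ((k*m - m*j₁ : ℕ):ℝ) ≤ (m:ℝ)*J := by
      rw [hJdef]
      exact_mod_cast hcard
    have hc0 : (0:ℝ) ≤ ((k*m - m*j₁ : ℕ):ℝ) := Nat.cast_nonneg _
    have : ((k*m - m*j₁ : ℕ):ℝ) * (2/J) ≤ ((m:ℝ)*J) * (2/J) :=
      mul_le_mul_of_nonneg_right hc (by positivity)
    have hid : ((m:ℝ)*J) * (2/J) = 2*m := by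
      field_simp
    nlinarith [this, hid]
  calc Real.exp (-(2*(m:ℝ))) ≤ Real.exp ((k*m - m*j₁ : ℕ) * (-(2/J))) := hstep1
    _ = (Real.exp (-(2/J)))^(k*m - m*j₁ : ℕ) := Real.exp_nat_mul _ _
    _ ≤ (1 - 1/J)^(k*m - m*j₁ : ℕ) := by
        apply pow_le_pow_left₀ (le_of_lt (Real.exp_pos _)) hexp1


lemma pc_nonneg {m k j₁ : ℕ} {α : ℝ} (hα1 : α ≤ 1) (hk : 3 ≤ k) (i : ℕ) :
    0 ≤ pc m k j₁ α i := by
  have hJ1 : (1:ℝ) ≤ ((k/2+1 : ℕ):ℝ) := by exact_mod_cast (by omega : 1 ≤ k/2+1)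
  have : 1/((k/2+1 : ℕ):ℝ) ≤ 1 := by
    rw [div_le_one (by linarith)]; exact hJ1
  unfold pc
  split
  · linarith
  · split
    · linarith
    · norm_num

lemma key_step {m k j₁ : ℕ} {α : ℝ} (hm : 1 ≤ m) (hk : 3 ≤ k)
    (hα0 : 0 ≤ α) (hα1 : α ≤ 1) (hj0 : k/2+1 ≤ j₁) (hjk : j₁ ≤ k) :
    Sf m k α j₁ ≤ (1 - pp m α/2) * Sf m k α (j₁+1) := by
  classical
  have hGcomp : ∀ g ∈ Confs (k*m),
      (∏ j ∈ Finset.Icc (j₁+1) k,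
          (if Ftr m k j (gx (k*m) (fun i : Fin (k*m+1) => σc m k j₁ (i:ℕ) (g i))) then (1/2:ℝ) else 1))
        = ∏ j ∈ Finset.Icc (j₁+1) k, (if Fcfg m k j (gx (k*m) g) then (1/2:ℝ) else 1) := by
    intro g hg
    refine Finset.prod_congr rfl fun j hj => ?_
    rw [Finset.mem_Icc] at hj
    rw [if_congr (Ftr_comp hm (by omega) hj.2 g) rfl rfl]
  have hexpand : ∀ g ∈ Confs (k*m),
      Wt (k*m) α g * ∏ j ∈ Finset.Icc j₁ k, (if Fcfg m k j (gx (k*m) g) then (1/2:ℝ) else 1)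
      = (fun t => ∏ j ∈ Finset.Icc (j₁+1) k, (if Ftr m k j (gx (k*m) t) then (1/2:ℝ) else 1))
            (fun i : Fin (k*m+1) => σc m k j₁ (i:ℕ) (g i))
          * (∏ i : Fin (k*m+1), wtc α (i:ℕ) (g i))
        - (1/2) * ((fun t => ∏ j ∈ Finset.Icc (j₁+1) k, (if Ftr m k j (gx (k*m) t) then (1/2:ℝ) else 1))
            (fun i : Fin (k*m+1) => σc m k j₁ (i:ℕ) (g i))
          * (∏ i : Fin (k*m+1), (wtc α (i:ℕ) (g i) * fc m j₁ (i:ℕ) (g i)))) := by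
    intro g hg
    simp only []
    have h1 : Finset.Icc j₁ k = insert j₁ (Finset.Icc (j₁+1) k) := by
      rw [Finset.Icc_add_one_left_eq_Ioc, Finset.Ioc_insert_left hjk]
    rw [h1, Finset.prod_insert (by simp)]
    rw [hGcomp g hg]
    rw [Finset.prod_mul_distrib, prod_fc_eq hjk g]
    unfold Wt
    by_cases hF : Fcfg m k j₁ (gx (k*m) g)
    · rw [if_pos hF, if_pos hF]; ring
    · rw [if_neg hF, if_neg hF]; ring
  unfold Sf
  rw [Finset.sum_congr rfl hexpand, Finset.sum_sub_distrib, ← Finset.mul_sum]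
  have hσT : ∀ i : Fin (k*m+1), ∀ x ∈ Vc (i:ℕ),
      σc m k j₁ (i:ℕ) x ∈ (Vc (i:ℕ)).image (σc m k j₁ (i:ℕ)) :=
    fun i x hx => Finset.mem_image_of_mem _ hx
  have hg0 :
      ∑ g ∈ Confs (k*m),
        (fun t => ∏ j ∈ Finset.Icc (j₁+1) k, (if Ftr m k j (gx (k*m) t) then (1/2:ℝ) else 1))
            (fun i : Fin (k*m+1) => σc m k j₁ (i:ℕ) (g i))
          * (∏ i : Fin (k*m+1), wtc α (i:ℕ) (g i))
      = ∑ t ∈ Fintype.piFinset (fun i : Fin (k*m+1) => (Vc (i:ℕ)).image (σc m k j₁ (i:ℕ))),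
          (∏ j ∈ Finset.Icc (j₁+1) k, (if Ftr m k j (gx (k*m) t) then (1/2:ℝ) else 1))
            * ∏ i : Fin (k*m+1),
                ∑ x ∈ (Vc (i:ℕ)).filter (fun x => σc m k j₁ (i:ℕ) x = t i), wtc α (i:ℕ) x :=
    group_lemma (fun i : Fin (k*m+1) => Vc (i:ℕ))
      (fun i => (Vc (i:ℕ)).image (σc m k j₁ (i:ℕ)))
      (fun i x => σc m k j₁ (i:ℕ) x) hσT (fun i x => wtc α (i:ℕ) x)
      (fun t => ∏ j ∈ Finset.Icc (j₁+1) k, (if Ftr m k j (gx (k*m) t) then (1/2:ℝ) else 1))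
  have hg1 :
      ∑ g ∈ Confs (k*m),
        (fun t => ∏ j ∈ Finset.Icc (j₁+1) k, (if Ftr m k j (gx (k*m) t) then (1/2:ℝ) else 1))
            (fun i : Fin (k*m+1) => σc m k j₁ (i:ℕ) (g i))
          * (∏ i : Fin (k*m+1), (wtc α (i:ℕ) (g i) * fc m j₁ (i:ℕ) (g i)))
      = ∑ t ∈ Fintype.piFinset (fun i : Fin (k*m+1) => (Vc (i:ℕ)).image (σc m k j₁ (i:ℕ))),
          (∏ j ∈ Finset.Icc (j₁+1) k, (if Ftr m k j (gx (k*m) t) then (1/2:ℝ) else 1))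
            * ∏ i : Fin (k*m+1),
                ∑ x ∈ (Vc (i:ℕ)).filter (fun x => σc m k j₁ (i:ℕ) x = t i),
                  wtc α (i:ℕ) x * fc m j₁ (i:ℕ) x :=
    group_lemma (fun i : Fin (k*m+1) => Vc (i:ℕ))
      (fun i => (Vc (i:ℕ)).image (σc m k j₁ (i:ℕ)))
      (fun i x => σc m k j₁ (i:ℕ) x) hσT (fun i x => wtc α (i:ℕ) x * fc m j₁ (i:ℕ) x)
      (fun t => ∏ j ∈ Finset.Icc (j₁+1) k, (if Ftr m k j (gx (k*m) t) then (1/2:ℝ) else 1))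
  rw [hg0, hg1]
  have hSf1 : ∑ g ∈ Confs (k*m), Wt (k*m) α g
        * ∏ j ∈ Finset.Icc (j₁+1) k, (if Fcfg m k j (gx (k*m) g) then (1/2:ℝ) else 1)
      = ∑ t ∈ Fintype.piFinset (fun i : Fin (k*m+1) => (Vc (i:ℕ)).image (σc m k j₁ (i:ℕ))),
          (∏ j ∈ Finset.Icc (j₁+1) k, (if Ftr m k j (gx (k*m) t) then (1/2:ℝ) else 1))
            * ∏ i : Fin (k*m+1),
                ∑ x ∈ (Vc (i:ℕ)).filter (fun x => σc m k j₁ (i:ℕ) x = t i), wtc α (i:ℕ) x := by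
    rw [← hg0]
    refine Finset.sum_congr rfl fun g hg => ?_
    simp only []
    rw [hGcomp g hg]
    unfold Wt
    ring
  rw [hSf1, Finset.mul_sum, Finset.mul_sum, ← Finset.sum_sub_distrib]
  apply Finset.sum_le_sum
  intro t ht
  set G := ∏ j ∈ Finset.Icc (j₁+1) k, (if Ftr m k j (gx (k*m) t) then (1/2:ℝ) else 1) with hGdef
  have hG0 : 0 ≤ G := by
    apply Finset.prod_nonneg
    intro j _
    split <;> norm_num
  set U0 := fun i : Fin (k*m+1) =>
    ∑ x ∈ (Vc (i:ℕ)).filter (fun x => σc m k j₁ (i:ℕ) x = t i), wtc α (i:ℕ) x with hU0def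
  set U1 := fun i : Fin (k*m+1) =>
    ∑ x ∈ (Vc (i:ℕ)).filter (fun x => σc m k j₁ (i:ℕ) x = t i), wtc α (i:ℕ) x * fc m j₁ (i:ℕ) x
    with hU1def
  have hU0nn : ∀ i, 0 ≤ U0 i :=
    fun i => Finset.sum_nonneg fun x _ => wtc_nonneg hα0 hα1 _ x
  have hfib : ∀ i : Fin (k*m+1), pc m k j₁ α (i:ℕ) * U0 i ≤ U1 i := by
    intro i
    exact fiber_ineq hm hk hα0 hα1 hj0 hjk (i:ℕ) (by omega) (t i)
  have hple : pp m α * ∏ i, U0 i ≤ ∏ i, U1 i := by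
    calc pp m α * ∏ i, U0 i ≤ (∏ i : Fin (k*m+1), pc m k j₁ α (i:ℕ)) * ∏ i, U0 i :=
          mul_le_mul_of_nonneg_right (prod_pc_ge hm hk hα0 hα1 hj0 hjk)
            (Finset.prod_nonneg fun i _ => hU0nn i)
      _ = ∏ i : Fin (k*m+1), (pc m k j₁ α (i:ℕ) * U0 i) := (Finset.prod_mul_distrib).symm
      _ ≤ ∏ i, U1 i := by
          apply Finset.prod_le_prod
          · intro i _
            exact mul_nonneg (pc_nonneg hα1 hk _) (hU0nn i)
          · intro i _
            exact hfib i
  have hP0 : 0 ≤ ∏ i : Fin (k*m+1), U0 i := Finset.prod_nonneg fun i _ => hU0nn i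
  nlinarith [mul_le_mul_of_nonneg_left hple hG0, mul_nonneg hG0 hP0]


lemma Wt_nonneg {n : ℕ} {α : ℝ} (hα0 : 0 ≤ α) (hα1 : α ≤ 1) (g : Fin (n+1) → Bool × ℕ) :
    0 ≤ Wt n α g :=
  Finset.prod_nonneg fun i _ => wtc_nonneg hα0 hα1 _ _

lemma pp_nonneg {m : ℕ} {α : ℝ} (hα1 : α ≤ 1) : 0 ≤ pp m α :=
  mul_nonneg (pow_nonneg (by linarith) m) (le_of_lt (Real.exp_pos _))

lemma pp_le_one {m : ℕ} {α : ℝ} (hα0 : 0 ≤ α) (hα1 : α ≤ 1) : pp m α ≤ 1 := by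
  unfold pp
  calc (1-α)^m * Real.exp (-(2*m)) ≤ 1 * 1 := by
        apply mul_le_mul _ _ (le_of_lt (Real.exp_pos _)) zero_le_one
        · exact pow_le_one₀ (by linarith) (by linarith)
        · calc Real.exp (-(2*m)) ≤ Real.exp 0 := Real.exp_le_exp.mpr (neg_nonpos.mpr (by positivity))
            _ = 1 := Real.exp_zero
    _ = 1 := one_mul 1

lemma chern {m k : ℕ} {α : ℝ} (hm : 1 ≤ m) (hk : 3 ≤ k) (hα0 : 0 ≤ α) (hα1 : α ≤ 1) :
    ∀ d j', k/2+1 ≤ j' → j' + d = k+1 → Sf m k α j' ≤ (1 - pp m α/2)^d := by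
  have hq0 : 0 ≤ 1 - pp m α/2 := by
    have := pp_le_one (m := m) hα0 hα1
    linarith
  intro d
  induction d with
  | zero =>
    intro j' hj' hsum
    have hj'e : j' = k+1 := by omega
    subst hj'e
    unfold Sf
    rw [Finset.Icc_eq_empty (by omega)]
    simp only [Finset.prod_empty, mul_one, pow_zero]
    rw [sum_Wt]
  | succ d ih =>
    intro j' hj' hsum
    have hjk : j' ≤ k := by omega
    calc Sf m k α j' ≤ (1 - pp m α/2) * Sf m k α (j'+1) :=
          key_step hm hk hα0 hα1 hj' hjk
      _ ≤ (1 - pp m α/2) * (1 - pp m α/2)^d :=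
          mul_le_mul_of_nonneg_left (ih (j'+1) (by omega) (by omega)) hq0
      _ = (1 - pp m α/2)^(d+1) := (pow_succ' _ _).symm

lemma markov {m k : ℕ} {α : ℝ} (hm : 1 ≤ m) (hk : 3 ≤ k) (hα0 : 0 ≤ α) (hα1 : α ≤ 1)
    (a : ℝ) (ha : 0 ≤ a) :
    ∑ g ∈ (Confs (k*m)).filter (fun g => ((Xc m k (gx (k*m) g) : ℝ) ≤ a)), Wt (k*m) α g
      ≤ (2:ℝ)^a * (1 - pp m α/2)^(k - k/2) := by
  classical
  have h2a0 : (0:ℝ) ≤ (2:ℝ)^a := le_of_lt (Real.rpow_pos_of_pos (by norm_num) a)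
  have hstep : ∀ g ∈ (Confs (k*m)).filter (fun g => ((Xc m k (gx (k*m) g) : ℝ) ≤ a)),
      Wt (k*m) α g ≤ (2:ℝ)^a * (Wt (k*m) α g
        * ∏ j ∈ Finset.Icc (k/2+1) k, (if Fcfg m k j (gx (k*m) g) then (1/2:ℝ) else 1)) := by
    intro g hg
    rw [Finset.mem_filter] at hg
    set X := Xc m k (gx (k*m) g) with hXdef
    have hprod : ∏ j ∈ Finset.Icc (k/2+1) k, (if Fcfg m k j (gx (k*m) g) then (1/2:ℝ) else 1)
        = (1/2:ℝ)^X := by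
      rw [Finset.prod_ite, Finset.prod_const, Finset.prod_const_one, mul_one, hXdef]
      rfl
    have h2 : (2:ℝ)^a * (1/2:ℝ)^(X:ℕ) = (2:ℝ)^(a - (X:ℝ)) := by
      rw [one_div, inv_pow, ← Real.rpow_natCast (2:ℝ) X, ← Real.rpow_neg (by norm_num),
        ← Real.rpow_add (by norm_num)]
      ring_nf
    have h3 : (1:ℝ) ≤ (2:ℝ)^(a - (X:ℝ)) := by
      rw [show (1:ℝ) = (2:ℝ)^(0:ℝ) from (Real.rpow_zero 2).symm]
      exact Real.rpow_le_rpow_of_exponent_le one_le_two (by linarith [hg.2])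
    calc Wt (k*m) α g = Wt (k*m) α g * 1 := (mul_one _).symm
      _ ≤ Wt (k*m) α g * ((2:ℝ)^a * (1/2:ℝ)^X) := by
          apply mul_le_mul_of_nonneg_left _ (Wt_nonneg hα0 hα1 g)
          rw [h2]; exact h3
      _ = (2:ℝ)^a * (Wt (k*m) α g * ∏ j ∈ Finset.Icc (k/2+1) k,
            (if Fcfg m k j (gx (k*m) g) then (1/2:ℝ) else 1)) := by
          rw [hprod]; ring
  have hsub : ∀ g ∈ Confs (k*m),
      0 ≤ Wt (k*m) α g * ∏ j ∈ Finset.Icc (k/2+1) k,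
          (if Fcfg m k j (gx (k*m) g) then (1/2:ℝ) else 1) := by
    intro g _
    apply mul_nonneg (Wt_nonneg hα0 hα1 g)
    apply Finset.prod_nonneg
    intro j _
    split <;> norm_num
  calc ∑ g ∈ (Confs (k*m)).filter (fun g => ((Xc m k (gx (k*m) g) : ℝ) ≤ a)), Wt (k*m) α g
      ≤ ∑ g ∈ (Confs (k*m)).filter (fun g => ((Xc m k (gx (k*m) g) : ℝ) ≤ a)),
          (2:ℝ)^a * (Wt (k*m) α g * ∏ j ∈ Finset.Icc (k/2+1) k,
            (if Fcfg m k j (gx (k*m) g) then (1/2:ℝ) else 1)) := Finset.sum_le_sum hstep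
    _ = (2:ℝ)^a * ∑ g ∈ (Confs (k*m)).filter (fun g => ((Xc m k (gx (k*m) g) : ℝ) ≤ a)),
          (Wt (k*m) α g * ∏ j ∈ Finset.Icc (k/2+1) k,
            (if Fcfg m k j (gx (k*m) g) then (1/2:ℝ) else 1)) := by rw [Finset.mul_sum]
    _ ≤ (2:ℝ)^a * Sf m k α (k/2+1) := by
        apply mul_le_mul_of_nonneg_left _ h2a0
        exact Finset.sum_le_sum_of_subset_of_nonneg (Finset.filter_subset _ _)
          (fun g hg _ => hsub g hg)
    _ ≤ (2:ℝ)^a * (1 - pp m α/2)^(k - k/2) := by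
        apply mul_le_mul_of_nonneg_left _ h2a0
        exact chern hm hk hα0 hα1 (k - k/2) (k/2+1) le_rfl (by omega)


lemma conf_snd_mem {n : ℕ} (g : Fin (n+1) → Bool × ℕ) (hg : g ∈ Confs n) {x : ℕ}
    (hx2 : 2 ≤ x) (hxlt : x < n+1) :
    1 ≤ (gx n g x).2 ∧ (gx n g x).2 ≤ x - 1 := by
  have hmem : g ⟨x,hxlt⟩ ∈ Vc x := Fintype.mem_piFinset.mp hg ⟨x, hxlt⟩
  unfold Vc at hmem
  rw [if_pos hx2, Finset.mem_product] at hmem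
  rw [gx_lt g hxlt]
  exact Finset.mem_Icc.mp hmem.2

lemma isol {Ω : Type} (ξ : ℕ → Ω → Bool) (u : ℕ → Ω → ℕ) (root : ℕ → Ω → ℕ)
    (hroot : IsForestRoot ξ u root) {m k : ℕ} (hm : 1 ≤ m) (hk : 3 ≤ k)
    (g : Fin (k*m+1) → Bool × ℕ) (hg : g ∈ Confs (k*m)) (ω : Ω)
    (hω : ∀ x, 2 ≤ x → x ≤ k*m → (ξ x ω = (gx (k*m) g x).1 ∧ u x ω = (gx (k*m) g x).2))
    {j : ℕ} (hj1 : k/2+1 ≤ j) (hj2 : j ≤ k) (hF : Fcfg m k j (gx (k*m) g)) :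
    ∀ v ∈ Finset.Icc (m*(j-1)+1) (m*j), clusterSize root (k*m) v ω = 1 := by
  intro v hv
  rw [Finset.mem_Icc] at hv
  have hj₁2 : 2 ≤ j := by omega
  have hmj1 : 1 ≤ m*(j-1) := by
    have := Nat.mul_le_mul hm (show 1 ≤ j-1 by omega); omega
  have hv2 : 2 ≤ v := by omega
  have hvn : v ≤ k*m := by
    have h2 : m*j ≤ m*k := Nat.mul_le_mul_left m hj2
    have h3 : m*k = k*m := Nat.mul_comm _ _
    omega
  have hurange : ∀ x, 2 ≤ x → x ≤ k*m → (1 ≤ u x ω ∧ u x ω ≤ x - 1) := by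
    intro x hx2 hxn
    have hxlt : x < k*m+1 := by omega
    have heq := (hω x hx2 hxn).2
    rw [heq]
    exact conf_snd_mem g hg hx2 hxlt
  have hmain : ∀ x, 1 ≤ x → x ≤ k*m → root x ω = v → x = v := by
    intro x
    induction x using Nat.strong_induction_on with
    | _ x ih =>
      intro hx1 hxn hr
      by_cases hx2 : 2 ≤ x
      · have hrec := hroot.2 ω x hx2
        by_cases hξ : ξ x ω = true
        · have hxB : x ∉ Bb m j := by
            intro hxB
            have h1 := hF.1 x hxB
            have h2 := (hω x hx2 hxn).1
            rw [h2, h1] at hξ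
            exact Bool.false_ne_true hξ
          rw [hrec, if_pos hξ] at hr
          obtain ⟨hu1, hu2⟩ := hurange x hx2 hxn
          have hux : u x ω = v := ih (u x ω) (by omega) hu1 (by omega) hr
          have hxgt : m*j < x := by
            rw [mem_Bb] at hxB
            omega
          have h2 := hF.2 x (Finset.mem_Ioc.mpr ⟨hxgt, hxn⟩)
          rw [← (hω x hx2 hxn).2] at h2
          exact absurd (by rw [hux]; exact mem_Bb.mpr ⟨hv.1, hv.2⟩) h2
        · rw [hrec, if_neg hξ] at hr
          exact hr
      · have hx1' : x = 1 := by omega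
        subst hx1'
        rw [hroot.1 ω] at hr
        omega
  unfold clusterSize
  have hset : (Finset.Icc 1 (k*m)).filter (fun x => root x ω = v) = {v} := by
    ext x
    simp only [Finset.mem_filter, Finset.mem_Icc, Finset.mem_singleton]
    constructor
    · rintro ⟨⟨h1, h2⟩, h3⟩
      exact hmain x h1 h2 h3
    · intro hxv
      rw [hxv]
      refine ⟨⟨by omega, hvn⟩, ?_⟩
      have hrec := hroot.2 ω v hv2
      have hξv : ξ v ω = (gx (k*m) g v).1 := (hω v hv2 hvn).1
      have hvB : v ∈ Bb m j := mem_Bb.mpr ⟨hv.1, hv.2⟩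
      have h1 := hF.1 v hvB
      rw [hrec, if_neg (by rw [hξv, h1]; exact Bool.false_ne_true)]
  rw [hset, Finset.card_singleton]


lemma final_numeric {m k : ℕ} {α : ℝ} (hm : 1 ≤ m) (hk : 3 ≤ k) (hα0 : 0 ≤ α) (hα1 : α ≤ 1) :
    (2:ℝ)^(Real.exp (-(2*(m:ℝ)))/8 * (1-α)^m * (k:ℝ)) * (1 - pp m α/2)^(k - k/2)
      ≤ Real.exp (-(Real.exp (-(2*(m:ℝ)))/8 * (1-α)^m * (k:ℝ))) := by
  have hppeq : pp m α = (1-α)^m * Real.exp (-(2*(m:ℝ))) := rfl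
  set c := Real.exp (-(2*(m:ℝ))) with hc
  set β := (1-α)^m with hβ
  have hc0 : (0:ℝ) < c := Real.exp_pos _
  have hβ0 : (0:ℝ) ≤ β := pow_nonneg (by linarith) m
  have hK0 : (0:ℝ) ≤ (k:ℝ) := Nat.cast_nonneg k
  have hN : (k:ℝ)/2 ≤ ((k - k/2 : ℕ):ℝ) := by
    have h1 : (k/2 : ℕ) ≤ k := Nat.div_le_self _ _
    rw [Nat.cast_sub h1]
    have h2 : ((k/2 : ℕ):ℝ) ≤ (k:ℝ)/2 := Nat.cast_div_le
    linarith
  set a := c/8*β*(k:ℝ) with hadef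
  have ha0 : 0 ≤ a := by positivity
  have h2a : (2:ℝ)^a = Real.exp (Real.log 2 * a) := Real.rpow_def_of_pos (by norm_num) a
  have hlog2 : Real.log 2 ≤ 1 := by
    have := Real.log_le_sub_one_of_pos (by norm_num : (0:ℝ) < 2); linarith
  have hpp0 : 0 ≤ pp m α := pp_nonneg hα1
  have hpp1 : pp m α ≤ 1 := pp_le_one hα0 hα1
  have hq : (1 - pp m α/2)^(k-k/2 : ℕ) ≤ Real.exp (-(pp m α/2) * ((k-k/2 : ℕ):ℝ)) := by
    have h1 : 1 - pp m α/2 ≤ Real.exp (-(pp m α/2)) := by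
      have := Real.add_one_le_exp (-(pp m α/2)); linarith
    calc (1 - pp m α/2)^(k-k/2:ℕ) ≤ (Real.exp (-(pp m α/2)))^(k-k/2:ℕ) :=
          pow_le_pow_left₀ (by linarith) h1 _
      _ = Real.exp (((k-k/2:ℕ):ℝ) * (-(pp m α/2))) := (Real.exp_nat_mul _ _).symm
      _ = Real.exp (-(pp m α/2) * ((k-k/2:ℕ):ℝ)) := by ring_nf
  have hppN : 2*a ≤ (pp m α/2) * ((k-k/2:ℕ):ℝ) := by
    rw [hppeq]
    have h1 : (β*c/2) * ((k:ℝ)/2) ≤ (β*c/2) * ((k-k/2:ℕ):ℝ) :=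
      mul_le_mul_of_nonneg_left hN (by positivity)
    have h2 : 2*a = (β*c/2) * ((k:ℝ)/2) := by rw [hadef]; ring
    rw [h2]
    exact h1
  calc (2:ℝ)^a * (1 - pp m α/2)^(k - k/2)
      ≤ Real.exp (Real.log 2 * a) * Real.exp (-(pp m α/2) * ((k-k/2:ℕ):ℝ)) := by
        rw [h2a]
        exact mul_le_mul_of_nonneg_left hq (le_of_lt (Real.exp_pos _))
    _ = Real.exp (Real.log 2 * a + (-(pp m α/2) * ((k-k/2:ℕ):ℝ))) := (Real.exp_add _ _).symm
    _ ≤ Real.exp (-a) := by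
        apply Real.exp_le_exp.mpr
        have hl2a : Real.log 2 * a ≤ a := by nlinarith
        linarith


end PRRF

/-- **Lemma 4.1.** For each positive integer `m` there are constants `C₁ = C₁(m) > 0` and
`C₂ = C₂(m) > 0` such that for every `α ∈ [0,1)` and every integer `k > m² + 1`,
`ℙ( I^{(m)}(k·m) ≤ C₁·(1−α)^m·k ) ≤ e^{−C₂·(1−α)^m·k}`. -/
theorem block_isolated_count_bound (m : ℕ) (hm : 1 ≤ m) :
    ∃ C₁ C₂ : ℝ, 0 < C₁ ∧ 0 < C₂ ∧
      ∀ α : ℝ, 0 ≤ α → α < 1 →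
        ∀ (Ω : Type) [MeasurableSpace Ω] (P : Measure Ω) [IsProbabilityMeasure P]
          (ξ : ℕ → Ω → Bool) (u : ℕ → Ω → ℕ) (root : ℕ → Ω → ℕ),
          ForestLaw P α ξ u → IsForestRoot ξ u root →
          ∀ k : ℕ, m ^ 2 + 1 < k →
            (P {ω | (blockIsolatedCount root m k ω : ℝ) ≤ C₁ * (1 - α) ^ m * k}).toReal ≤
              Real.exp (-(C₂ * (1 - α) ^ m * k)) := by
  classical
  refine ⟨Real.exp (-(2*(m:ℝ)))/8, Real.exp (-(2*(m:ℝ)))/8, by positivity, by positivity, ?_⟩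
  intro α hα0 hα1 Ω _ P _ ξ u root hlaw hroot k hk
  obtain ⟨hmξ, hmu, hprod⟩ := hlaw
  have hα1' : α ≤ 1 := le_of_lt hα1
  have hk3 : 3 ≤ k := by
    have h1 : 1 ≤ m^2 := Nat.one_le_pow _ _ hm
    omega
  have hn2 : 2 ≤ k*m := by
    have := Nat.mul_le_mul hk3 hm
    omega
  set n := k*m with hn
  set a : ℝ := Real.exp (-(2*(m:ℝ)))/8 * (1-α)^m * (k:ℝ) with ha
  have ha0 : 0 ≤ a := by
    rw [ha]
    exact mul_nonneg (mul_nonneg (by positivity) (pow_nonneg (by linarith) m)) (Nat.cast_nonneg k)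
  set Cyl : (Fin (n+1) → Bool × ℕ) → Set Ω := fun g =>
    {ω | ∀ x, 2 ≤ x → x ≤ n → (ξ x ω = (PRRF.gx n g x).1 ∧ u x ω = (PRRF.gx n g x).2)}
    with hCyl
  have hmeas : ∀ g, MeasurableSet (Cyl g) := by
    intro g
    have hEq : Cyl g = ⋂ x ∈ Finset.Icc 2 n,
        ({ω | ξ x ω = (PRRF.gx n g x).1} ∩ {ω | u x ω = (PRRF.gx n g x).2}) := by
      ext ω
      simp only [hCyl, Set.mem_setOf_eq, Set.mem_iInter, Set.mem_inter_iff, Finset.mem_Icc]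
      constructor
      · intro h x hx; exact h x hx.1 hx.2
      · intro h x hx1 hx2; exact h x ⟨hx1, hx2⟩
    rw [hEq]
    exact Finset.measurableSet_biInter _ (fun x _ => (hmξ x _).inter (hmu x _))
  have hprob : ∀ g ∈ PRRF.Confs n, (P (Cyl g)).toReal = PRRF.Wt n α g := by
    intro g hg
    have h' : (P (Cyl g)).toReal = ∏ x ∈ Finset.Icc 2 n,
        ((if (PRRF.gx n g x).1 = true then α else 1 - α) *
          (if 1 ≤ (PRRF.gx n g x).2 ∧ (PRRF.gx n g x).2 ≤ x - 1 then 1 / ((x : ℝ) - 1) else 0)) :=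
      hprod n hn2 (fun x => (PRRF.gx n g x).1) (fun x => (PRRF.gx n g x).2)
    rw [h']
    have hterm : ∀ x ∈ Finset.Icc 2 n,
        ((if (PRRF.gx n g x).1 = true then α else 1 - α) *
          (if 1 ≤ (PRRF.gx n g x).2 ∧ (PRRF.gx n g x).2 ≤ x - 1 then 1 / ((x : ℝ) - 1) else 0))
        = PRRF.wtc α x (PRRF.gx n g x) := by
      intro x hx
      rw [Finset.mem_Icc] at hx
      have hxlt : x < n+1 := by omega
      have hsnd := PRRF.conf_snd_mem g hg hx.1 hxlt
      unfold PRRF.wtc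
      rw [if_pos hx.1, if_pos hsnd]
    rw [Finset.prod_congr rfl hterm]
    unfold PRRF.Wt
    rw [← PRRF.prod_fin_eq_prod_Icc hn2 (fun x => PRRF.wtc α x (PRRF.gx n g x))
      (by unfold PRRF.wtc; norm_num) (by unfold PRRF.wtc; norm_num)]
    refine Finset.prod_congr rfl fun i _ => ?_
    rw [PRRF.gx_coe]
  have hdisj : (↑(PRRF.Confs n) : Set (Fin (n+1) → Bool × ℕ)).PairwiseDisjoint Cyl := by
    intro g hg g' hg' hne
    rw [Function.onFun, Set.disjoint_left]
    intro ω hω hω'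
    apply hne
    funext i
    by_cases h2 : 2 ≤ (i:ℕ)
    · have hin : (i:ℕ) ≤ n := by omega
      have e1 := hω (i:ℕ) h2 hin
      have e2 := hω' (i:ℕ) h2 hin
      have hEq : PRRF.gx n g i = PRRF.gx n g' i := by
        apply Prod.ext
        · rw [← e1.1, ← e2.1]
        · rw [← e1.2, ← e2.2]
      rwa [PRRF.gx_coe, PRRF.gx_coe] at hEq
    · have hsg : g i ∈ PRRF.Vc i := Fintype.mem_piFinset.mp (Finset.mem_coe.mp hg) i
      have hsg' : g' i ∈ PRRF.Vc i := Fintype.mem_piFinset.mp (Finset.mem_coe.mp hg') i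
      unfold PRRF.Vc at hsg hsg'
      rw [if_neg h2] at hsg hsg'
      rw [Finset.mem_singleton] at hsg hsg'
      rw [hsg, hsg']
  have hPGood : P (⋃ g ∈ PRRF.Confs n, Cyl g) = 1 := by
    have h1 : P (⋃ g ∈ PRRF.Confs n, Cyl g) = ∑ g ∈ PRRF.Confs n, P (Cyl g) :=
      measure_biUnion_finset hdisj (fun g _ => hmeas g)
    have h2 : (∑ g ∈ PRRF.Confs n, P (Cyl g)).toReal = 1 := by
      rw [ENNReal.toReal_sum (fun g _ => measure_ne_top P _)]
      rw [Finset.sum_congr rfl hprob]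
      exact PRRF.sum_Wt α
    rw [h1]
    have hne : (∑ g ∈ PRRF.Confs n, P (Cyl g)) ≠ ⊤ := by
      rw [← h1]; exact measure_ne_top P _
    exact (ENNReal.toReal_eq_toReal_iff' hne (by simp)).mp (by simpa using h2)
  have hGoodMeas : MeasurableSet (⋃ g ∈ PRRF.Confs n, Cyl g) :=
    (PRRF.Confs n).measurableSet_biUnion (fun g _ => hmeas g)
  have hcompl : P ((⋃ g ∈ PRRF.Confs n, Cyl g)ᶜ) = 0 :=
    (prob_compl_eq_zero_iff hGoodMeas).mpr hPGood
  have hsubE : {ω | ((blockIsolatedCount root m k ω : ℝ) ≤ a)} ⊆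
      (⋃ g ∈ (PRRF.Confs n).filter (fun g => ((PRRF.Xc m k (PRRF.gx n g) : ℝ) ≤ a)), Cyl g)
        ∪ (⋃ g ∈ PRRF.Confs n, Cyl g)ᶜ := by
    intro ω hω
    by_cases hgood : ω ∈ ⋃ g ∈ PRRF.Confs n, Cyl g
    · left
      rw [Set.mem_iUnion₂] at hgood
      obtain ⟨g, hg, hωg⟩ := hgood
      rw [Set.mem_iUnion₂]
      refine ⟨g, ?_, hωg⟩
      rw [Finset.mem_filter]
      refine ⟨hg, ?_⟩
      have hXle : PRRF.Xc m k (PRRF.gx n g) ≤ blockIsolatedCount root m k ω := by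
        unfold PRRF.Xc blockIsolatedCount
        apply Finset.card_le_card
        intro j hj
        rw [Finset.mem_filter] at hj ⊢
        have hjIcc := Finset.mem_Icc.mp hj.1
        constructor
        · rw [Finset.mem_Icc]
          exact ⟨by omega, hjIcc.2⟩
        · exact PRRF.isol ξ u root hroot hm hk3 g hg ω hωg hjIcc.1 hjIcc.2 hj.2
      calc (PRRF.Xc m k (PRRF.gx n g) : ℝ) ≤ (blockIsolatedCount root m k ω : ℝ) :=
            Nat.cast_le.mpr hXle
        _ ≤ a := hω
    · right; exact hgood
  have hPU1 : (P (⋃ g ∈ (PRRF.Confs n).filter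
        (fun g => ((PRRF.Xc m k (PRRF.gx n g) : ℝ) ≤ a)), Cyl g)).toReal
      = ∑ g ∈ (PRRF.Confs n).filter (fun g => ((PRRF.Xc m k (PRRF.gx n g) : ℝ) ≤ a)),
          PRRF.Wt n α g := by
    rw [measure_biUnion_finset
      (hdisj.subset (Finset.coe_subset.mpr (Finset.filter_subset _ _)))
      (fun g _ => hmeas g)]
    rw [ENNReal.toReal_sum (fun g _ => measure_ne_top P _)]
    exact Finset.sum_congr rfl (fun g hg => hprob g (Finset.mem_of_mem_filter g hg))
  have hmainbound : (P {ω | ((blockIsolatedCount root m k ω : ℝ) ≤ a)}).toReal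
      ≤ ∑ g ∈ (PRRF.Confs n).filter (fun g => ((PRRF.Xc m k (PRRF.gx n g) : ℝ) ≤ a)),
          PRRF.Wt n α g := by
    have hb1 : P {ω | ((blockIsolatedCount root m k ω : ℝ) ≤ a)}
        ≤ P (⋃ g ∈ (PRRF.Confs n).filter
            (fun g => ((PRRF.Xc m k (PRRF.gx n g) : ℝ) ≤ a)), Cyl g)
          + P ((⋃ g ∈ PRRF.Confs n, Cyl g)ᶜ) :=
      le_trans (measure_mono hsubE) (measure_union_le _ _)
    have hb2 := ENNReal.toReal_mono
      (ENNReal.add_ne_top.mpr ⟨measure_ne_top P _, measure_ne_top P _⟩) hb1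
    rw [ENNReal.toReal_add (measure_ne_top P _) (measure_ne_top P _), hcompl] at hb2
    rw [hPU1, ENNReal.toReal_zero, add_zero] at hb2
    exact hb2
  calc (P {ω | ((blockIsolatedCount root m k ω : ℝ) ≤ a)}).toReal
      ≤ ∑ g ∈ (PRRF.Confs n).filter (fun g => ((PRRF.Xc m k (PRRF.gx n g) : ℝ) ≤ a)),
          PRRF.Wt n α g := hmainbound
    _ ≤ (2:ℝ)^a * (1 - PRRF.pp m α/2)^(k - k/2) :=
          PRRF.markov hm hk3 hα0 hα1' a ha0
    _ ≤ Real.exp (-a) := PRRF.final_numeric hm hk3 hα0 hα1'
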